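/- For the rotated image f_R(x) = f(Rx) with R a rotation by angle ψ, the wave packet transform satisfies W_{f_R}(a, θ, b) = W_f(a, θ + ψ, R b) for all a, θ, b, provided the mother wave packet w is radially symmetric in the sense that w(A_a R_θ^{-1} y) depends on y only through A_a R_θ^{-1} y. Consequently the synchrosqueezed energy distribution in polar coordinates satisfies T_{f_R}(r, ϑ, b) = T_f(r, ϑ + ψ mod π, R b). -/

import Mathlib

open MeasureTheory Real

noncomputable section

abbrev V2 := ℝ × ℝ

/-- Dot product on ℝ². -/
def dot2 (x y : V2) : ℝ := x.1 * y.1 + x.2 * y.2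

/-- Rotation by angle θ. -/
def rot2 (θ : ℝ) (x : V2) : V2 :=
  (Real.cos θ * x.1 - Real.sin θ * x.2, Real.sin θ * x.1 + Real.cos θ * x.2)

/-- Anisotropic scaling A_a = diag(a^t, a^s). -/
def scal (a t s : ℝ) (x : V2) : V2 := (a ^ t * x.1, a ^ s * x.2)

/-- Unit vector e_θ. -/
def unitVec (θ : ℝ) : V2 := (Real.cos θ, Real.sin θ)

/-- Wave packet w_{aθb}(x) = a^{(t+s)/2} e^{2πi a (x-b)·e_θ} w(A_a R_θ⁻¹ (x-b)). -/
def wp (w : V2 → ℂ) (t s a θ : ℝ) (b : V2) (x : V2) : ℂ :=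
  ((a ^ ((t + s) / 2) : ℝ) : ℂ) *
    Complex.exp (2 * Real.pi * Complex.I * (a * dot2 (x - b) (unitVec θ))) *
    w (scal a t s (rot2 (-θ) (x - b)))

/-- Wave packet transform W_f(a,θ,b) = ∫ conj(w_{aθb}(x)) f(x) dx. -/
def WPT (w : V2 → ℂ) (t s : ℝ) (f : V2 → ℂ) (a θ : ℝ) (b : V2) : ℂ :=
  ∫ x : V2, (starRingEnd ℂ) (wp w t s a θ b x) * f x

/-- Local wave vector estimate v_f(a,θ,b) = Re(∇_b W_f / (2πi W_f)). -/
def vfEst (w : V2 → ℂ) (t s : ℝ) (f : V2 → ℂ) (a θ : ℝ) (b : V2) : V2 :=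
  ((fderiv ℝ (fun b' => WPT w t s f a θ b') b ((1 : ℝ), (0 : ℝ)) /
      (2 * Real.pi * Complex.I * WPT w t s f a θ b)).re,
   (fderiv ℝ (fun b' => WPT w t s f a θ b') b ((0 : ℝ), (1 : ℝ)) /
      (2 * Real.pi * Complex.I * WPT w t s f a θ b)).re)

/-- Fourier transform on ℝ². -/
def ft (g : V2 → ℂ) (ξ : V2) : ℂ :=
  ∫ x : V2, Complex.exp (-(2 * Real.pi * Complex.I * dot2 x ξ)) * g x

/-- Euclidean norm on ℝ². -/
def nrm (x : V2) : ℝ := Real.sqrt (x.1 ^ 2 + x.2 ^ 2)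

/-- The synchrosqueezed energy distribution of `f` at `b`, as a measure on the
plane of local wave vectors: pushforward under (a,θ) ↦ v_f(a,θ,b) of the measure
|W_f(a,θ,b)|² a da dθ on {(a,θ) ∈ (0,∞)×[0,2π) : |W_f| > γ}. -/
def ssMeasure (w : V2 → ℂ) (t s γ : ℝ) (f : V2 → ℂ) (b : V2) : Measure V2 :=
  Measure.map (fun p : ℝ × ℝ => vfEst w t s f p.1 p.2 b)
    ((((volume : Measure (ℝ × ℝ)).restrict
          {p : ℝ × ℝ | 0 < p.1 ∧ p.2 ∈ Set.Ico 0 (2 * Real.pi) ∧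
            γ < ‖WPT w t s f p.1 p.2 b‖}).withDensity
        fun p => ENNReal.ofReal (‖WPT w t s f p.1 p.2 b‖ ^ 2 * p.1)))

namespace RotAux

/-! ### Elementary rotation algebra -/

lemma rot2_rot2 (α β : ℝ) (v : V2) : rot2 α (rot2 β v) = rot2 (α + β) v := by
  simp only [rot2, Real.cos_add, Real.sin_add, Prod.mk.injEq]
  constructor <;> ring

lemma rot2_zero (v : V2) : rot2 0 v = v := by simp [rot2]

lemma rot2_neg_rot2 (φ : ℝ) (v : V2) : rot2 (-φ) (rot2 φ v) = v := by
  rw [rot2_rot2, neg_add_cancel, rot2_zero]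

lemma rot2_rot2_neg (φ : ℝ) (v : V2) : rot2 φ (rot2 (-φ) v) = v := by
  simpa using rot2_neg_rot2 (-φ) v

lemma rot2_sub (φ : ℝ) (x y : V2) : rot2 φ (x - y) = rot2 φ x - rot2 φ y := by
  simp only [rot2, Prod.mk_sub_mk, Prod.fst_sub, Prod.snd_sub, Prod.mk.injEq]
  constructor <;> ring

lemma dot2_rot2 (φ : ℝ) (u v : V2) : dot2 (rot2 φ u) (rot2 φ v) = dot2 u v := by
  simp only [dot2, rot2]
  linear_combination (u.1 * v.1 + u.2 * v.2) * (Real.sin_sq_add_cos_sq φ)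

lemma unitVec_rot (θ ψ : ℝ) : rot2 ψ (unitVec θ) = unitVec (θ + ψ) := by
  simp only [rot2, unitVec, Real.cos_add, Real.sin_add, Prod.mk.injEq]
  constructor <;> ring

lemma continuous_rot2 (φ : ℝ) : Continuous (rot2 φ) := by
  unfold rot2; fun_prop

/-- Rotation as a measurable equivalence of the plane. -/
def rotME (ψ : ℝ) : V2 ≃ᵐ V2 where
  toFun := rot2 ψ
  invFun := rot2 (-ψ)
  left_inv := rot2_neg_rot2 ψ
  right_inv := rot2_rot2_neg ψ
  measurable_toFun := (continuous_rot2 ψ).measurable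
  measurable_invFun := (continuous_rot2 (-ψ)).measurable

lemma rot2_eq_complex (ψ : ℝ) :
    (fun p : ℝ × ℝ => Complex.measurableEquivRealProd
      (rotation (Circle.exp ψ) (Complex.measurableEquivRealProd.symm p))) = rot2 ψ := by
  funext p
  simp only [Complex.measurableEquivRealProd_apply, rotation_apply, Circle.coe_exp,
    Complex.measurableEquivRealProd_symm_apply, rot2, Prod.mk.injEq, Complex.mul_re,
    Complex.mul_im, Complex.exp_ofReal_mul_I_re, Complex.exp_ofReal_mul_I_im]
  exact ⟨trivial, by ring⟩

lemma rot2_measurePreserving (ψ : ℝ) :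
    MeasurePreserving (rot2 ψ) (volume : Measure V2) volume := by
  have h := (Complex.volume_preserving_equiv_real_prod).comp
      (((rotation (Circle.exp ψ)).measurePreserving).comp
        (Complex.volume_preserving_equiv_real_prod.symm _))
  have h2 := rot2_eq_complex ψ
  rw [← h2]
  exact h

/-- Rotation as a continuous linear equivalence. -/
def rotCLE (ψ : ℝ) : V2 ≃L[ℝ] V2 :=
  (Complex.equivRealProdCLM.symm.trans
      ((rotation (Circle.exp ψ)).toContinuousLinearEquiv)).trans Complex.equivRealProdCLM

lemma rotCLE_apply (ψ : ℝ) (p : V2) : rotCLE ψ p = rot2 ψ p := by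
  have := congrFun (rot2_eq_complex ψ) p
  unfold rotCLE; simp
  simp only [rot2, Prod.mk.injEq]
  exact ⟨trivial, by ring⟩

/-! ### Rotation covariance of wave packets -/

/-- The key wave-packet rotation identity. -/
lemma wp_rot (w : V2 → ℂ) (t s a θ ψ : ℝ) (b y : V2) :
    wp w t s a θ b (rot2 (-ψ) y) = wp w t s a (θ + ψ) (rot2 ψ b) y := by
  have h1 : rot2 (-ψ) y - b = rot2 (-ψ) (y - rot2 ψ b) := by
    rw [rot2_sub, rot2_neg_rot2]
  have h2 : dot2 (rot2 (-ψ) (y - rot2 ψ b)) (unitVec θ)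
      = dot2 (y - rot2 ψ b) (unitVec (θ + ψ)) := by
    rw [← unitVec_rot, ← dot2_rot2 ψ (rot2 (-ψ) (y - rot2 ψ b)), rot2_rot2_neg]
  have h3 : rot2 (-θ) (rot2 (-ψ) (y - rot2 ψ b)) = rot2 (-(θ + ψ)) (y - rot2 ψ b) := by
    rw [rot2_rot2]; ring_nf
  unfold wp
  rw [h1, h2, h3]

/-- Part 1: rotation covariance of the wave packet transform. -/
lemma WPT_rot (w : V2 → ℂ) (t s : ℝ) (f : V2 → ℂ) (ψ a θ : ℝ) (b : V2) :
    WPT w t s (fun x => f (rot2 ψ x)) a θ b = WPT w t s f a (θ + ψ) (rot2 ψ b) := by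
  unfold WPT
  have hmp : MeasurePreserving (⇑(rotME ψ)) (volume : Measure V2) volume :=
    rot2_measurePreserving ψ
  have key := hmp.integral_comp'
    (g := fun y => (starRingEnd ℂ) (wp w t s a θ b (rot2 (-ψ) y)) * f y)
  calc ∫ x : V2, (starRingEnd ℂ) (wp w t s a θ b x) * f (rot2 ψ x)
      = ∫ x : V2, (starRingEnd ℂ) (wp w t s a θ b (rot2 (-ψ) (rotME ψ x))) * f (rotME ψ x) := by
        congr 1; funext x
        show _ = (starRingEnd ℂ) (wp w t s a θ b (rot2 (-ψ) (rot2 ψ x))) * f (rot2 ψ x)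
        rw [rot2_neg_rot2]
    _ = ∫ y : V2, (starRingEnd ℂ) (wp w t s a θ b (rot2 (-ψ) y)) * f y := key
    _ = ∫ y : V2, (starRingEnd ℂ) (wp w t s a (θ + ψ) (rot2 ψ b) y) * f y := by
        congr 1; funext y; rw [wp_rot]

/-- The local wave vector estimate transforms by rotation. -/
lemma vfEst_rot (w : V2 → ℂ) (t s : ℝ) (f : V2 → ℂ) (ψ a θ : ℝ) (b : V2) :
    vfEst w t s (fun x => f (rot2 ψ x)) a θ b
      = rot2 (-ψ) (vfEst w t s f a (θ + ψ) (rot2 ψ b)) := by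
  have hfun : (fun b' => WPT w t s (fun x => f (rot2 ψ x)) a θ b')
      = (fun c => WPT w t s f a (θ + ψ) c) ∘ ⇑(rotCLE ψ) := by
    funext b'
    simp only [Function.comp_apply, rotCLE_apply]
    exact WPT_rot w t s f ψ a θ b'
  have hD := (rotCLE ψ).comp_right_fderiv (f := fun c => WPT w t s f a (θ + ψ) c) (x := b)
  have hW : WPT w t s (fun x => f (rot2 ψ x)) a θ b = WPT w t s f a (θ + ψ) (rot2 ψ b) :=
    WPT_rot w t s f ψ a θ b
  unfold vfEst
  rw [hfun, hD, hW, rotCLE_apply]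
  set D := fderiv ℝ (fun c => WPT w t s f a (θ + ψ) c) (rot2 ψ b) with hDdef
  set Z := (2 * Real.pi * Complex.I * WPT w t s f a (θ + ψ) (rot2 ψ b)) with hZ
  have e1 : (rotCLE ψ) ((1 : ℝ), (0 : ℝ)) = (Real.cos ψ, Real.sin ψ) := by
    rw [rotCLE_apply]; simp [rot2]
  have e2 : (rotCLE ψ) ((0 : ℝ), (1 : ℝ)) = (-Real.sin ψ, Real.cos ψ) := by
    rw [rotCLE_apply]; simp [rot2]
  have hsplit : ∀ c₁ c₂ : ℝ,
      ((c₁, c₂) : V2) = c₁ • ((1 : ℝ), (0 : ℝ)) + c₂ • ((0 : ℝ), (1 : ℝ)) := by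
    intro c₁ c₂; simp [Prod.ext_iff]
  have hDapp : ∀ c₁ c₂ : ℝ, D ((c₁, c₂) : V2)
      = (c₁ : ℂ) * D ((1 : ℝ), (0 : ℝ)) + (c₂ : ℂ) * D ((0 : ℝ), (1 : ℝ)) := by
    intro c₁ c₂
    rw [hsplit c₁ c₂, map_add, D.map_smul, D.map_smul]
    simp [Complex.real_smul]
  simp only [ContinuousLinearMap.comp_apply, ContinuousLinearEquiv.coe_coe, e1, e2]
  rw [hDapp (Real.cos ψ) (Real.sin ψ), hDapp (-Real.sin ψ) (Real.cos ψ)]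
  have hre : ∀ (c₁ c₂ : ℝ) (z₁ z₂ : ℂ),
      (((c₁ : ℂ) * z₁ + (c₂ : ℂ) * z₂) / Z).re = c₁ * (z₁ / Z).re + c₂ * (z₂ / Z).re := by
    intro c₁ c₂ z₁ z₂
    rw [add_div, mul_div_assoc, mul_div_assoc]
    simp [Complex.add_re, Complex.re_ofReal_mul]
  rw [hre, hre]
  simp only [rot2, Real.cos_neg, Real.sin_neg, Prod.mk.injEq]
  exact ⟨by ring, trivial⟩

/-! ### Periodicity in the angular variable -/

lemma rot2_per (φ : ℝ) (k : ℤ) (v : V2) : rot2 (φ + k * (2 * π)) v = rot2 φ v := by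
  simp [rot2, Real.cos_add_int_mul_two_pi, Real.sin_add_int_mul_two_pi]

lemma unitVec_per (θ : ℝ) (k : ℤ) : unitVec (θ + k * (2 * π)) = unitVec θ := by
  simp [unitVec, Real.cos_add_int_mul_two_pi, Real.sin_add_int_mul_two_pi]

lemma wp_per (w : V2 → ℂ) (t s a θ : ℝ) (k : ℤ) (b : V2) :
    wp w t s a (θ + k * (2 * π)) b = wp w t s a θ b := by
  funext x
  unfold wp
  rw [unitVec_per]
  have h : -(θ + (k : ℝ) * (2 * π)) = -θ + ((-k : ℤ) : ℝ) * (2 * π) := by push_cast; ring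
  rw [h, rot2_per]

lemma WPT_per (w : V2 → ℂ) (t s : ℝ) (f : V2 → ℂ) (a θ : ℝ) (k : ℤ) (c : V2) :
    WPT w t s f a (θ + k * (2 * π)) c = WPT w t s f a θ c := by
  unfold WPT
  rw [wp_per]

lemma vfEst_per (w : V2 → ℂ) (t s : ℝ) (f : V2 → ℂ) (a θ : ℝ) (k : ℤ) (c : V2) :
    vfEst w t s f a (θ + k * (2 * π)) c = vfEst w t s f a θ c := by
  have h : (fun b' => WPT w t s f a (θ + k * (2 * π)) b') = fun b' => WPT w t s f a θ b' := by
    funext b'; exact WPT_per w t s f a θ k b'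
  unfold vfEst
  rw [h, WPT_per]

/-! ### The wrapping map -/

def wrapAdd (T ψ x : ℝ) : ℝ := x + ψ - T * ⌊(x + ψ) / T⌋ + T * ⌊x / T⌋

lemma wrapAdd_eq_add_int_mul (T ψ x : ℝ) :
    wrapAdd T ψ x = (x + ψ) + (↑(⌊x / T⌋ - ⌊(x + ψ) / T⌋) : ℝ) * T := by
  unfold wrapAdd; push_cast; ring

lemma floor_div_wrapAdd {T : ℝ} (hT : 0 < T) (ψ x : ℝ) : ⌊wrapAdd T ψ x / T⌋ = ⌊x / T⌋ := by
  have hT' : T ≠ 0 := ne_of_gt hT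
  have h : wrapAdd T ψ x / T = (↑⌊x / T⌋ : ℝ) + Int.fract ((x + ψ) / T) := by
    rw [Int.fract]; unfold wrapAdd; field_simp; ring
  rw [h, Int.floor_intCast_add, Int.floor_fract, add_zero]

lemma wrapAdd_left_inv {T : ℝ} (hT : 0 < T) (ψ x : ℝ) : wrapAdd T (-ψ) (wrapAdd T ψ x) = x := by
  have hT' : T ≠ 0 := ne_of_gt hT
  set n := ⌊x / T⌋ with hn
  set m := ⌊(x + ψ) / T⌋ with hm
  have hy : wrapAdd T ψ x + -ψ = x + (↑(n - m) : ℝ) * T := by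
    unfold wrapAdd; push_cast; ring
  have hdiv : (wrapAdd T ψ x + -ψ) / T = x / T + (↑(n - m) : ℝ) := by
    rw [hy]; field_simp
  have hfl : ⌊(wrapAdd T ψ x + -ψ) / T⌋ = n + (n - m) := by
    rw [hdiv, Int.floor_add_intCast]
  have hshow : wrapAdd T (-ψ) (wrapAdd T ψ x)
      = (wrapAdd T ψ x + -ψ) - T * ⌊(wrapAdd T ψ x + -ψ) / T⌋ + T * ⌊wrapAdd T ψ x / T⌋ := rfl
  rw [hshow, hfl, floor_div_wrapAdd hT, hy, ← hn]
  push_cast; ring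

lemma wrapAdd_right_inv {T : ℝ} (hT : 0 < T) (ψ x : ℝ) : wrapAdd T ψ (wrapAdd T (-ψ) x) = x := by
  simpa using wrapAdd_left_inv hT (-ψ) x

lemma measurable_wrapAdd (T ψ : ℝ) : Measurable (wrapAdd T ψ) := by
  unfold wrapAdd
  have hfl : ∀ c : ℝ, Measurable (fun x : ℝ => ((⌊(x + c) / T⌋ : ℤ) : ℝ)) := by
    intro c
    exact measurable_from_top.comp (((measurable_id.add_const c).div_const T).floor)
  have h0 : Measurable (fun x : ℝ => ((⌊x / T⌋ : ℤ) : ℝ)) := by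
    simpa using hfl 0
  exact (((measurable_id.add_const ψ).sub (measurable_const.mul (hfl ψ))).add
    (measurable_const.mul h0))

lemma wrapAdd_mem_Ico {T : ℝ} (hT : 0 < T) (ψ : ℝ) {x : ℝ} (hx : x ∈ Set.Ico 0 T) :
    wrapAdd T ψ x ∈ Set.Ico 0 T := by
  have h1 : ⌊x / T⌋ = 0 :=
    Int.floor_eq_zero_iff.2 ⟨div_nonneg hx.1 hT.le, (div_lt_one hT).2 hx.2⟩
  have h2 : ⌊wrapAdd T ψ x / T⌋ = 0 := by rw [floor_div_wrapAdd hT, h1]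
  have h3 := Int.floor_eq_zero_iff.1 h2
  constructor
  · have := h3.1
    rw [le_div_iff₀ hT] at this
    simpa using this
  · have := h3.2
    rwa [div_lt_one hT] at this

lemma fract_eq_of_Ico {u : ℝ} (h0 : 0 ≤ u) (h1 : u < 1) : Int.fract u = u :=
  Int.fract_eq_self.2 ⟨h0, h1⟩

lemma fract_eq_of_Ico' {u : ℝ} (h0 : 1 ≤ u) (h1 : u < 2) : Int.fract u = u - 1 := by
  have h : Int.fract (u - (1 : ℤ)) = Int.fract u := Int.fract_sub_intCast u 1
  rw [← h]
  push_cast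
  exact Int.fract_eq_self.2 ⟨by linarith, by linarith⟩

lemma wrapAdd_measurePreserving {T : ℝ} (hT : 0 < T) (ψ : ℝ) :
    MeasurePreserving (wrapAdd T ψ) (volume : Measure ℝ) volume := by
  refine ⟨measurable_wrapAdd T ψ, ?_⟩
  have hT' : T ≠ 0 := ne_of_gt hT
  set σ := Int.fract (ψ / T) with hσ
  have hσ0 : 0 ≤ σ := Int.fract_nonneg _
  have hσ1 : σ < 1 := Int.fract_lt_one _
  have hψT : (⌊ψ / T⌋ : ℝ) + σ = ψ / T := Int.floor_add_fract (ψ / T)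
  have hfloor : ∀ x : ℝ, ⌊(x + ψ) / T⌋ = ⌊x / T⌋ + ⌊ψ / T⌋ + ⌊Int.fract (x / T) + σ⌋ := by
    intro x
    have h1 : (x + ψ) / T = (⌊x / T⌋ : ℝ) + (Int.fract (x / T) + ψ / T) := by
      rw [add_div]
      have := Int.floor_add_fract (x / T); linarith
    rw [h1, Int.floor_intCast_add]
    have h2 : Int.fract (x / T) + ψ / T = (⌊ψ / T⌋ : ℝ) + (Int.fract (x / T) + σ) := by
      linarith
    rw [h2, Int.floor_intCast_add]
    ring
  have hTσ : T * ((⌊ψ / T⌋ : ℝ) + σ) = ψ := by rw [hψT]; field_simp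
  have case1 : ∀ x : ℝ, Int.fract (x / T) < 1 - σ → wrapAdd T ψ x = x + T * σ := by
    intro x hx
    have hfl0 : ⌊Int.fract (x / T) + σ⌋ = 0 :=
      Int.floor_eq_zero_iff.2 ⟨add_nonneg (Int.fract_nonneg _) hσ0, by linarith⟩
    unfold wrapAdd
    rw [hfloor x, hfl0]
    push_cast
    nlinarith [hTσ]
  have case2 : ∀ x : ℝ, 1 - σ ≤ Int.fract (x / T) → wrapAdd T ψ x = x + (T * σ - T) := by
    intro x hx
    have hfl1 : ⌊Int.fract (x / T) + σ⌋ = 1 := by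
      apply Int.floor_eq_iff.2
      constructor
      · push_cast; linarith
      · push_cast; linarith [Int.fract_lt_one (x / T)]
    unfold wrapAdd
    rw [hfloor x, hfl1]
    push_cast
    nlinarith [hTσ]
  have hfract_shift : ∀ x : ℝ, Int.fract ((x + T * σ) / T) = Int.fract (Int.fract (x / T) + σ) := by
    intro x
    have h1 : (x + T * σ) / T = x / T + σ := by field_simp
    rw [h1]
    have h0 : x / T + σ = (⌊x / T⌋ : ℝ) + (Int.fract (x / T) + σ) := by
      have := Int.floor_add_fract (x / T); linarith
    rw [h0, Int.fract_intCast_add]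
  have hiff1 : ∀ x : ℝ, Int.fract (x / T) < 1 - σ ↔ σ ≤ Int.fract ((x + T * σ) / T) := by
    intro x
    rw [hfract_shift]
    constructor
    · intro hx
      rw [fract_eq_of_Ico (add_nonneg (Int.fract_nonneg _) hσ0) (by linarith)]
      linarith [Int.fract_nonneg (x / T)]
    · intro hx
      by_contra hc
      push_neg at hc
      rw [fract_eq_of_Ico' (by linarith) (by linarith [Int.fract_lt_one (x / T)])] at hx
      linarith [Int.fract_lt_one (x / T)]
  have hiff2 : ∀ x : ℝ, 1 - σ ≤ Int.fract (x / T) ↔ Int.fract ((x + (T * σ - T)) / T) < σ := by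
    intro x
    have hrw : (x + (T * σ - T)) / T = (x + T * σ) / T - ((1 : ℤ) : ℝ) := by
      push_cast; field_simp; ring
    rw [hrw, Int.fract_sub_intCast, hfract_shift]
    constructor
    · intro hx
      rw [fract_eq_of_Ico' (by linarith) (by linarith [Int.fract_lt_one (x / T)])]
      linarith [Int.fract_lt_one (x / T)]
    · intro hx
      by_contra hc
      push_neg at hc
      rw [fract_eq_of_Ico (add_nonneg (Int.fract_nonneg _) hσ0) (by linarith)] at hx
      linarith [Int.fract_nonneg (x / T)]
  set A' := {y : ℝ | σ ≤ Int.fract (y / T)} with hA'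
  have hmA' : MeasurableSet A' :=
    measurableSet_le measurable_const (measurable_fract.comp (measurable_id.div_const T))
  apply Measure.ext
  intro B hB
  rw [Measure.map_apply (measurable_wrapAdd T ψ) hB]
  have hsplit : wrapAdd T ψ ⁻¹' B
      = ((fun x => x + T * σ) ⁻¹' (B ∩ A')) ∪ ((fun x => x + (T * σ - T)) ⁻¹' (B ∩ A'ᶜ)) := by
    ext x
    simp only [Set.mem_preimage, Set.mem_union, Set.mem_inter_iff, Set.mem_compl_iff, hA',
      Set.mem_setOf_eq, not_le]
    by_cases hx : Int.fract (x / T) < 1 - σ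
    · have h1 := case1 x hx
      have h2 := (hiff1 x).1 hx
      have h3 : ¬ Int.fract ((x + (T * σ - T)) / T) < σ := fun hc => by
        linarith [(hiff2 x).2 hc]
      constructor
      · intro hb; exact Or.inl ⟨h1 ▸ hb, h2⟩
      · rintro (⟨hb, _⟩ | ⟨_, hc⟩)
        · rwa [h1]
        · exact absurd hc h3
    · push_neg at hx
      have h1 := case2 x hx
      have h2 := (hiff2 x).1 hx
      have h3 : ¬ σ ≤ Int.fract ((x + T * σ) / T) := fun hc => by
        linarith [(hiff1 x).2 hc]
      constructor
      · intro hb; exact Or.inr ⟨h1 ▸ hb, h2⟩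
      · rintro (⟨_, hc⟩ | ⟨hb, _⟩)
        · exact absurd hc h3
        · rwa [h1]
  rw [hsplit]
  have hd : Disjoint ((fun x => x + T * σ) ⁻¹' (B ∩ A'))
      ((fun x => x + (T * σ - T)) ⁻¹' (B ∩ A'ᶜ)) := by
    rw [Set.disjoint_left]
    intro x h1 h2
    have e1 : σ ≤ Int.fract ((x + T * σ) / T) := h1.2
    have e2 : ¬ σ ≤ Int.fract ((x + (T * σ - T)) / T) := h2.2
    have hx1 := (hiff1 x).2 e1
    have hx2 := (hiff2 x).2 (not_le.1 e2)
    linarith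
  rw [measure_union hd ((hB.inter hmA'.compl).preimage (measurable_id.add_const _))]
  rw [measure_preimage_add_right, measure_preimage_add_right]
  have hBd : B ∩ A'ᶜ = B \ A' := (Set.diff_eq B A').symm
  rw [hBd, measure_inter_add_diff B hmA']

/-- The wrapping map as a measurable equivalence. -/
def eME (ψ : ℝ) : ℝ ≃ᵐ ℝ where
  toFun := wrapAdd (2 * π) ψ
  invFun := wrapAdd (2 * π) (-ψ)
  left_inv := wrapAdd_left_inv Real.two_pi_pos ψ
  right_inv := wrapAdd_right_inv Real.two_pi_pos ψ
  measurable_toFun := measurable_wrapAdd _ ψ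
  measurable_invFun := measurable_wrapAdd _ (-ψ)

/-- The wrapping map on the (a,θ)-plane. -/
def EME (ψ : ℝ) : (ℝ × ℝ) ≃ᵐ (ℝ × ℝ) := (MeasurableEquiv.refl ℝ).prodCongr (eME ψ)

lemma EME_apply (ψ : ℝ) (p : ℝ × ℝ) : (EME ψ) p = (p.1, wrapAdd (2 * π) ψ p.2) := rfl

lemma EME_symm_apply (ψ : ℝ) (q : ℝ × ℝ) :
    (EME ψ).symm q = (q.1, wrapAdd (2 * π) (-ψ) q.2) := rfl

lemma EME_measurePreserving (ψ : ℝ) :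
    MeasurePreserving (⇑(EME ψ)) (volume : Measure (ℝ × ℝ)) volume := by
  have h := (MeasurePreserving.id (volume : Measure ℝ)).prod
    (wrapAdd_measurePreserving Real.two_pi_pos ψ)
  rw [← Measure.volume_eq_prod] at h
  exact h

lemma WPT_wrap (w : V2 → ℂ) (t s : ℝ) (f : V2 → ℂ) (a ψ θ : ℝ) (c : V2) :
    WPT w t s f a (wrapAdd (2 * π) ψ θ) c = WPT w t s f a (θ + ψ) c := by
  rw [wrapAdd_eq_add_int_mul]
  exact WPT_per w t s f a (θ + ψ) _ c

lemma vfEst_wrap (w : V2 → ℂ) (t s : ℝ) (f : V2 → ℂ) (a ψ θ : ℝ) (c : V2) :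
    vfEst w t s f a (wrapAdd (2 * π) ψ θ) c = vfEst w t s f a (θ + ψ) c := by
  rw [wrapAdd_eq_add_int_mul]
  exact vfEst_per w t s f a (θ + ψ) _ c

/-! ### General measure-theoretic transport lemmas -/

section MeasAux

variable {α β γ : Type*} [MeasurableSpace α] [MeasurableSpace β] [MeasurableSpace γ]

lemma map_comp_equiv_right (e : α ≃ᵐ β) (g : β → γ) (μ : Measure α) :
    μ.map (g ∘ ⇑e) = (μ.map e).map g := by
  by_cases h : AEMeasurable g (μ.map e)
  · exact (AEMeasurable.map_map_of_aemeasurable h e.measurable.aemeasurable).symm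
  · have h2 : ¬ AEMeasurable (g ∘ ⇑e) μ := by
      intro hc
      apply h
      have hc' : AEMeasurable ((g ∘ ⇑e) ∘ ⇑e.symm) (μ.map e) := by
        apply AEMeasurable.comp_aemeasurable (f := ⇑e.symm)
        · rw [MeasurableEquiv.map_symm_map]
          exact hc
        · exact e.symm.measurable.aemeasurable
      have heq : (g ∘ ⇑e) ∘ ⇑e.symm = g := by funext y; simp
      rwa [heq] at hc'
    rw [Measure.map_of_not_aemeasurable h2, Measure.map_of_not_aemeasurable h]

lemma map_comp_equiv_left (e : β ≃ᵐ γ) (F : α → β) (μ : Measure α) :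
    μ.map (⇑e ∘ F) = (μ.map F).map e := by
  by_cases h : AEMeasurable F μ
  · exact (AEMeasurable.map_map_of_aemeasurable e.measurable.aemeasurable h).symm
  · have h2 : ¬ AEMeasurable (⇑e ∘ F) μ := by
      intro hc
      apply h
      have heq : ⇑e.symm ∘ (⇑e ∘ F) = F := by funext x; simp
      rw [← heq]
      exact e.symm.measurable.comp_aemeasurable hc
    rw [Measure.map_of_not_aemeasurable h2, Measure.map_of_not_aemeasurable h,
      Measure.map_zero]

lemma map_equiv_withDensity (e : α ≃ᵐ β) (μ : Measure α) (d : α → ENNReal) :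
    (μ.withDensity d).map e = (μ.map e).withDensity (d ∘ ⇑e.symm) := by
  ext A hA
  rw [MeasurableEquiv.map_apply, withDensity_apply _ (e.measurable hA), withDensity_apply _ hA,
    ← lintegral_indicator (e.measurable hA), ← lintegral_indicator hA,
    lintegral_map_equiv (A.indicator (d ∘ ⇑e.symm)) e]
  congr 1
  funext x
  by_cases hx : e x ∈ A
  · simp [Set.indicator_apply, hx, Set.mem_preimage]
  · simp [Set.indicator_apply, hx, Set.mem_preimage]

lemma map_equiv_restrict (e : α ≃ᵐ β) (μ : Measure α) (S : Set α) :
    (μ.restrict S).map e = (μ.map e).restrict (⇑e '' S) := by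
  ext A hA
  rw [MeasurableEquiv.map_apply, Measure.restrict_apply (e.measurable hA),
    Measure.restrict_apply hA, MeasurableEquiv.map_apply]
  congr 1
  rw [Set.preimage_inter, Set.preimage_image_eq S e.injective]

end MeasAux

end RotAux

theorem wpt_rotation_covariance
    (w : SchwartzMap V2 ℂ) (t s γ : ℝ) (hγ : 0 < γ)
    (hs : 1 / 2 < s) (hst : s ≤ t) (ht : t < 1)
    (hwrad : ∀ (φ : ℝ) (y : V2), w (rot2 φ y) = w y)
    (f : V2 → ℂ) (hf : Integrable f) (ψ : ℝ) :
    (∀ (a θ : ℝ) (b : V2),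
        WPT (⇑w) t s (fun x => f (rot2 ψ x)) a θ b = WPT (⇑w) t s f a (θ + ψ) (rot2 ψ b)) ∧
      ∀ b : V2,
        ssMeasure (⇑w) t s γ (fun x => f (rot2 ψ x)) b =
          Measure.map (rot2 (-ψ)) (ssMeasure (⇑w) t s γ f (rot2 ψ b)) := by
  open RotAux in
  constructor
  · intro a θ b
    exact RotAux.WPT_rot (⇑w) t s f ψ a θ b
  · intro b
    have hWq : ∀ q : ℝ × ℝ,
        WPT (⇑w) t s (fun x => f (rot2 ψ x)) q.1 (wrapAdd (2 * π) (-ψ) q.2) b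
          = WPT (⇑w) t s f q.1 q.2 (rot2 ψ b) := by
      intro q
      rw [WPT_rot (⇑w) t s f ψ q.1 (wrapAdd (2 * π) (-ψ) q.2) b,
        ← WPT_wrap (⇑w) t s f q.1 ψ (wrapAdd (2 * π) (-ψ) q.2) (rot2 ψ b),
        wrapAdd_right_inv Real.two_pi_pos]
    unfold ssMeasure
    have hF1 : (fun p : ℝ × ℝ => vfEst (⇑w) t s (fun x => f (rot2 ψ x)) p.1 p.2 b)
        = (rot2 (-ψ) ∘ fun p : ℝ × ℝ => vfEst (⇑w) t s f p.1 p.2 (rot2 ψ b)) ∘ ⇑(EME ψ) := by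
      funext p
      show vfEst (⇑w) t s (fun x => f (rot2 ψ x)) p.1 p.2 b
          = rot2 (-ψ) (vfEst (⇑w) t s f ((EME ψ) p).1 ((EME ψ) p).2 (rot2 ψ b))
      rw [EME_apply]
      rw [show ((p.1, wrapAdd (2 * π) ψ p.2) : ℝ × ℝ).2 = wrapAdd (2 * π) ψ p.2 from rfl,
        show ((p.1, wrapAdd (2 * π) ψ p.2) : ℝ × ℝ).1 = p.1 from rfl]
      rw [vfEst_wrap (⇑w) t s f p.1 ψ p.2 (rot2 ψ b)]
      exact vfEst_rot (⇑w) t s f ψ p.1 p.2 b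
    rw [hF1, map_comp_equiv_right (EME ψ)]
    have hμ : (((volume : Measure (ℝ × ℝ)).restrict
          {p : ℝ × ℝ | 0 < p.1 ∧ p.2 ∈ Set.Ico 0 (2 * Real.pi) ∧
            γ < ‖WPT (⇑w) t s (fun x => f (rot2 ψ x)) p.1 p.2 b‖}).withDensity
            (fun p => ENNReal.ofReal
              (‖WPT (⇑w) t s (fun x => f (rot2 ψ x)) p.1 p.2 b‖ ^ 2 * p.1))).map
          (EME ψ)
        = ((volume : Measure (ℝ × ℝ)).restrict
          {p : ℝ × ℝ | 0 < p.1 ∧ p.2 ∈ Set.Ico 0 (2 * Real.pi) ∧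
            γ < ‖WPT (⇑w) t s f p.1 p.2 (rot2 ψ b)‖}).withDensity
            (fun p => ENNReal.ofReal
              (‖WPT (⇑w) t s f p.1 p.2 (rot2 ψ b)‖ ^ 2 * p.1)) := by
      rw [map_equiv_withDensity, map_equiv_restrict, (EME_measurePreserving ψ).map_eq]
      have hset : ⇑(EME ψ) ''
          {p : ℝ × ℝ | 0 < p.1 ∧ p.2 ∈ Set.Ico 0 (2 * Real.pi) ∧
            γ < ‖WPT (⇑w) t s (fun x => f (rot2 ψ x)) p.1 p.2 b‖}
          = {p : ℝ × ℝ | 0 < p.1 ∧ p.2 ∈ Set.Ico 0 (2 * Real.pi) ∧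
            γ < ‖WPT (⇑w) t s f p.1 p.2 (rot2 ψ b)‖} := by
        rw [MeasurableEquiv.image_eq_preimage_symm]
        ext q
        simp only [Set.mem_preimage, Set.mem_setOf_eq, EME_symm_apply]
        have hIco : wrapAdd (2 * π) (-ψ) q.2 ∈ Set.Ico 0 (2 * Real.pi)
            ↔ q.2 ∈ Set.Ico 0 (2 * Real.pi) := by
          constructor
          · intro h
            have h2 := wrapAdd_mem_Ico Real.two_pi_pos ψ h
            rwa [wrapAdd_right_inv Real.two_pi_pos] at h2
          · intro h
            exact wrapAdd_mem_Ico Real.two_pi_pos (-ψ) h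
        rw [hWq q, hIco]
      have hden : ((fun p : ℝ × ℝ => ENNReal.ofReal
            (‖WPT (⇑w) t s (fun x => f (rot2 ψ x)) p.1 p.2 b‖ ^ 2 * p.1))
            ∘ ⇑(EME ψ).symm)
          = fun p : ℝ × ℝ => ENNReal.ofReal
            (‖WPT (⇑w) t s f p.1 p.2 (rot2 ψ b)‖ ^ 2 * p.1) := by
        funext q
        show ENNReal.ofReal
            (‖WPT (⇑w) t s (fun x => f (rot2 ψ x)) ((EME ψ).symm q).1
              ((EME ψ).symm q).2 b‖ ^ 2 * ((EME ψ).symm q).1) = _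
        rw [EME_symm_apply]
        rw [show ((q.1, wrapAdd (2 * π) (-ψ) q.2) : ℝ × ℝ).2 = wrapAdd (2 * π) (-ψ) q.2 from rfl,
          show ((q.1, wrapAdd (2 * π) (-ψ) q.2) : ℝ × ℝ).1 = q.1 from rfl]
        rw [hWq q]
      rw [hset, hden]
    rw [hμ]
    exact RotAux.map_comp_equiv_left (rotME (-ψ))
      (fun p : ℝ × ℝ => vfEst (⇑w) t s f p.1 p.2 (rot2 ψ b)) _
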